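/- Let n ≥ 1, let c₀ ≥ 0, γ ∈ (0,1), T > 0, and let t_j > 0 with t_j ≤ T for 1 ≤ j ≤ n. Let E_0, …, E_n, D_1, …, D_n, F_1, …, F_n be nonnegative reals, let (A^{(j)}_{j−k})_{1≤k≤j≤n} be real kernels, and let (P^{(n)}_{n−j})_{1≤j≤n} be nonnegative reals satisfying both ∑_{j=k}^{n} P^{(n)}_{n−j} A^{(j)}_{j−k} = 1 for every 1 ≤ k ≤ n and ∑_{j=1}^{n} P^{(n)}_{n−j} · t_j^{−γ}/Γ(1−γ) ≤ π_A for some π_A > 0. If ∑_{k=1}^{j} A^{(j)}_{j−k} (E_k − E_{k−1}) + 2c₀ D_j ≤ 2F_j for every 1 ≤ j ≤ n, then E_n ≤ E_0 + 2 π_A Γ(1−γ) T^{γ} · max_{1≤j≤n} F_j. -/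

import Mathlib

open Finset

/-- combined discrete stability bound: under the complementary-kernel
identity and the kernel weight bound, the recursion
`∑_{k=1}^{j} A^{(j)}_{j-k} (E_k - E_{k-1}) + 2c₀ D_j ≤ 2F_j` (1 ≤ j ≤ n) implies
`E_n ≤ E_0 + 2 π_A Γ(1-γ) T^γ · max_{1≤j≤n} F_j`.
Here `A j k` denotes `A^{(j)}_{j-k}` and `P j` denotes `P^{(n)}_{n-j}`. -/
theorem discrete_stability_final_bound
    (n : ℕ) (hn : 1 ≤ n)
    (c₀ γ T πA : ℝ)
    (hc₀ : 0 ≤ c₀) (hγ0 : 0 < γ) (hγ1 : γ < 1) (hT : 0 < T) (hπA : 0 < πA)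
    (t : ℕ → ℝ) (ht : ∀ j, 1 ≤ j → j ≤ n → 0 < t j ∧ t j ≤ T)
    (E D F : ℕ → ℝ)
    (hE : ∀ j, j ≤ n → 0 ≤ E j)
    (hD : ∀ j, 1 ≤ j → j ≤ n → 0 ≤ D j)
    (hF : ∀ j, 1 ≤ j → j ≤ n → 0 ≤ F j)
    (A : ℕ → ℕ → ℝ) (P : ℕ → ℝ)
    (hP : ∀ j, 1 ≤ j → j ≤ n → 0 ≤ P j)
    (hcomp : ∀ k, 1 ≤ k → k ≤ n → ∑ j ∈ Finset.Icc k n, P j * A j k = 1)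
    (hker : ∑ j ∈ Finset.Icc 1 n, P j * (t j ^ (-γ) / Real.Gamma (1 - γ)) ≤ πA)
    (hineq : ∀ j, 1 ≤ j → j ≤ n →
      ∑ k ∈ Finset.Icc 1 j, A j k * (E k - E (k - 1)) + 2 * c₀ * D j ≤ 2 * F j) :
    E n ≤ E 0 + 2 * πA * Real.Gamma (1 - γ) * T ^ γ *
      (Finset.Icc 1 n).sup' (Finset.nonempty_Icc.mpr hn) F := by
  set M := (Finset.Icc 1 n).sup' (Finset.nonempty_Icc.mpr hn) F with hMdef
  have hΓ : 0 < Real.Gamma (1 - γ) := Real.Gamma_pos_of_pos (by linarith)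
  have hMF : ∀ j ∈ Finset.Icc 1 n, F j ≤ M := fun j hj => Finset.le_sup' F hj
  have hM0 : 0 ≤ M :=
    le_trans (hF 1 le_rfl hn) (hMF 1 (by simp [hn]))
  have hS : ∑ j ∈ Finset.Icc 1 n, P j ≤ πA * (Real.Gamma (1 - γ) * T ^ γ) := by
    calc ∑ j ∈ Finset.Icc 1 n, P j
        ≤ ∑ j ∈ Finset.Icc 1 n,
            (P j * (t j ^ (-γ) / Real.Gamma (1 - γ))) * (Real.Gamma (1 - γ) * T ^ γ) := by
          apply Finset.sum_le_sum
          intro j hj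
          simp only [Finset.mem_Icc] at hj
          obtain ⟨htj, htjT⟩ := ht j hj.1 hj.2
          have hTg : T ^ (-γ) ≤ t j ^ (-γ) :=
            Real.rpow_le_rpow_of_nonpos htj htjT (by linarith)
          have h1 : (1 : ℝ) ≤ t j ^ (-γ) * T ^ γ := by
            calc (1 : ℝ) = T ^ (-γ) * T ^ γ := by
                  rw [← Real.rpow_add hT]; simp
              _ ≤ t j ^ (-γ) * T ^ γ :=
                  mul_le_mul_of_nonneg_right hTg (Real.rpow_nonneg hT.le γ)
          have hPj := hP j hj.1 hj.2
          calc P j = P j * 1 := (mul_one _).symm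
            _ ≤ P j * (t j ^ (-γ) * T ^ γ) := mul_le_mul_of_nonneg_left h1 hPj
            _ = P j * (t j ^ (-γ) / Real.Gamma (1 - γ)) * (Real.Gamma (1 - γ) * T ^ γ) := by
                field_simp
      _ = (∑ j ∈ Finset.Icc 1 n, P j * (t j ^ (-γ) / Real.Gamma (1 - γ))) *
            (Real.Gamma (1 - γ) * T ^ γ) := by
          rw [← Finset.sum_mul]
      _ ≤ πA * (Real.Gamma (1 - γ) * T ^ γ) := by
          apply mul_le_mul_of_nonneg_right hker
          positivity
  have hswap : ∑ j ∈ Finset.Icc 1 n, P j * ∑ k ∈ Finset.Icc 1 j, A j k * (E k - E (k - 1))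
      = E n - E 0 := by
    have h1 : ∑ j ∈ Finset.Icc 1 n, P j * ∑ k ∈ Finset.Icc 1 j, A j k * (E k - E (k - 1))
        = ∑ j ∈ Finset.Icc 1 n, ∑ k ∈ Finset.Icc 1 j, P j * A j k * (E k - E (k - 1)) := by
      refine Finset.sum_congr rfl fun j _ => ?_
      rw [Finset.mul_sum]
      exact Finset.sum_congr rfl fun k _ => by ring
    rw [h1]
    rw [Finset.sum_comm' (s' := fun k => Finset.Icc k n) (t' := Finset.Icc 1 n)
      (by intro j k; simp only [Finset.mem_Icc]; omega)]
    have h2 : ∀ k ∈ Finset.Icc 1 n,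
        ∑ j ∈ Finset.Icc k n, P j * A j k * (E k - E (k - 1)) = E k - E (k - 1) := by
      intro k hk
      simp only [Finset.mem_Icc] at hk
      rw [← Finset.sum_mul, hcomp k hk.1 hk.2, one_mul]
    rw [Finset.sum_congr rfl h2]
    have h3 : ∑ k ∈ Finset.Icc 1 n, (E k - E (k - 1))
        = ∑ i ∈ Finset.range n, (E (i + 1) - E i) := by
      rw [show Finset.Icc 1 n = Finset.Ico 1 (n + 1) by rw [Finset.Ico_add_one_right_eq_Icc],
        Finset.sum_Ico_eq_sum_range]
      simp only [Nat.add_sub_cancel]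
      exact Finset.sum_congr rfl fun i _ => by rw [Nat.add_comm 1 i]; simp
    rw [h3, Finset.sum_range_sub]
  have hmain : E n - E 0 ≤ 2 * ∑ j ∈ Finset.Icc 1 n, P j * F j := by
    rw [← hswap]
    calc ∑ j ∈ Finset.Icc 1 n, P j * ∑ k ∈ Finset.Icc 1 j, A j k * (E k - E (k - 1))
        ≤ ∑ j ∈ Finset.Icc 1 n, P j * (2 * F j) := by
          apply Finset.sum_le_sum
          intro j hj
          simp only [Finset.mem_Icc] at hj
          apply mul_le_mul_of_nonneg_left _ (hP j hj.1 hj.2)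
          have := hineq j hj.1 hj.2
          have hD' := hD j hj.1 hj.2
          nlinarith
      _ = 2 * ∑ j ∈ Finset.Icc 1 n, P j * F j := by
          rw [Finset.mul_sum]
          exact Finset.sum_congr rfl fun j _ => by ring
  have hPF : ∑ j ∈ Finset.Icc 1 n, P j * F j ≤ (∑ j ∈ Finset.Icc 1 n, P j) * M := by
    rw [Finset.sum_mul]
    apply Finset.sum_le_sum
    intro j hj
    have := hP j (Finset.mem_Icc.mp hj).1 (Finset.mem_Icc.mp hj).2
    exact mul_le_mul_of_nonneg_left (hMF j hj) this
  have hfin : (∑ j ∈ Finset.Icc 1 n, P j) * M ≤ πA * (Real.Gamma (1 - γ) * T ^ γ) * M :=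
    mul_le_mul_of_nonneg_right hS hM0
  nlinarith [hmain, hPF, hfin]
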